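/- Every complex root z of the polynomial f(X) = a_0 X^n + a_1 X^{n-1} + ... + a_n with a_0 ≠ 0 satisfies |z| ≤ (2^{1/n} - 1)^{-1} · max_{1 ≤ k ≤ n} |a_k / (a_0 · C(n,k))|^{1/k}. -/

import Mathlib

/-- Every complex root `z` of `f(X) = a_0 X^n + a_1 X^{n-1} + ... + a_n`
with `a_0 ≠ 0` satisfies
`|z| ≤ (2^{1/n} - 1)⁻¹ * max_{1 ≤ k ≤ n} |a_k / (a_0 * C(n,k))|^{1/k}`. -/
theorem root_bound (n : ℕ) (hn : 1 ≤ n) (a : ℕ → ℂ) (ha : a 0 ≠ 0) (z : ℂ)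
    (hz : (∑ k ∈ Finset.range (n + 1), a k * z ^ (n - k)) = 0) :
    ‖z‖ ≤ ((2 : ℝ) ^ ((1 : ℝ) / n) - 1)⁻¹ *
      (Finset.Icc 1 n).sup' (Finset.nonempty_Icc.mpr hn)
        (fun k => (‖a k / (a 0 * (n.choose k))‖) ^ ((1 : ℝ) / k)) := by
  set M := (Finset.Icc 1 n).sup' (Finset.nonempty_Icc.mpr hn)
      (fun k => (‖a k / (a 0 * (n.choose k))‖) ^ ((1 : ℝ) / k)) with hMdef
  have hM0 : 0 ≤ M := by
    refine le_trans ?_ (Finset.le_sup' _ (Finset.mem_Icc.mpr ⟨le_refl 1, hn⟩))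
    positivity
  have hn0 : (n : ℝ) ≠ 0 := by positivity
  have ha0 : 0 < ‖a 0‖ := by
    simpa using (norm_pos_iff.mpr ha)
  -- coefficient bound
  have hcoef : ∀ k ∈ Finset.Icc 1 n,
      ‖a k‖ ≤ ‖a 0‖ * (n.choose k) * M ^ k := by
    intro k hk
    obtain ⟨hk1, hkn⟩ := Finset.mem_Icc.mp hk
    have hkk : (k : ℝ) ≠ 0 := Nat.cast_ne_zero.mpr (by omega)
    have hc : (0 : ℝ) < (n.choose k : ℝ) := by
      exact_mod_cast Nat.choose_pos hkn
    set x := ‖a k / (a 0 * (n.choose k))‖ with hxdef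
    have hx0 : 0 ≤ x := norm_nonneg _
    have hle : x ^ ((1 : ℝ) / k) ≤ M :=
      Finset.le_sup' (fun k => (‖a k / (a 0 * (n.choose k))‖) ^ ((1 : ℝ) / k)) hk
    have hxM : x ≤ M ^ k := by
      have h1 : (x ^ ((1 : ℝ) / k)) ^ k ≤ M ^ k :=
        pow_le_pow_left₀ (Real.rpow_nonneg hx0 _) hle k
      calc x = (x ^ ((1 : ℝ) / k)) ^ k := by
              rw [← Real.rpow_natCast (x ^ ((1 : ℝ) / k)) k, ← Real.rpow_mul hx0,
                one_div_mul_cancel hkk, Real.rpow_one]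
        _ ≤ M ^ k := h1
    have hxval : x = ‖a k‖ / (‖a 0‖ * (n.choose k)) := by
      rw [hxdef, norm_div, norm_mul]
      norm_num
    rw [hxval] at hxM
    have hd : 0 < ‖a 0‖ * (n.choose k : ℝ) := by positivity
    calc ‖a k‖
        = ‖a k‖ / (‖a 0‖ * (n.choose k)) *
          (‖a 0‖ * (n.choose k)) := by field_simp
      _ ≤ M ^ k * (‖a 0‖ * (n.choose k)) := by
          exact mul_le_mul_of_nonneg_right hxM hd.le
      _ = ‖a 0‖ * (n.choose k) * M ^ k := by ring
  -- rearrange the root equation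
  have heq : a 0 * z ^ n = -∑ i ∈ Finset.range n, a (i + 1) * z ^ (n - (i + 1)) := by
    have := Finset.sum_range_succ' (fun k => a k * z ^ (n - k)) n
    rw [hz] at this
    simp only [Nat.sub_zero] at this
    linear_combination -this
  set r := ‖z‖ with hrdef
  have hr0 : 0 ≤ r := norm_nonneg _
  have hstep : r ^ n ≤ ∑ i ∈ Finset.range n, (n.choose (i + 1) : ℝ) * M ^ (i + 1) * r ^ (n - (i + 1)) := by
    have h1 : ‖a 0‖ * r ^ n ≤
        ∑ i ∈ Finset.range n, ‖a 0‖ * ((n.choose (i + 1) : ℝ) * M ^ (i + 1) * r ^ (n - (i + 1))) := by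
      calc ‖a 0‖ * r ^ n
          = ‖a 0 * z ^ n‖ := by rw [norm_mul, norm_pow]
        _ = ‖∑ i ∈ Finset.range n, a (i + 1) * z ^ (n - (i + 1))‖ := by
            rw [heq, norm_neg]
        _ ≤ ∑ i ∈ Finset.range n, ‖a (i + 1) * z ^ (n - (i + 1))‖ :=
            norm_sum_le _ _
        _ ≤ ∑ i ∈ Finset.range n, ‖a 0‖ * ((n.choose (i + 1) : ℝ) * M ^ (i + 1) * r ^ (n - (i + 1))) := by
            refine Finset.sum_le_sum ?_
            intro i hi
            have hi' : i + 1 ∈ Finset.Icc 1 n := by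
              simp only [Finset.mem_range] at hi
              exact Finset.mem_Icc.mpr ⟨by omega, by omega⟩
            rw [norm_mul, norm_pow]
            calc ‖a (i + 1)‖ * r ^ (n - (i + 1))
                ≤ ‖a 0‖ * (n.choose (i + 1)) * M ^ (i + 1) * r ^ (n - (i + 1)) :=
                  mul_le_mul_of_nonneg_right (hcoef _ hi') (by positivity)
              _ = ‖a 0‖ * ((n.choose (i + 1) : ℝ) * M ^ (i + 1) * r ^ (n - (i + 1))) := by ring
    rw [← Finset.mul_sum] at h1
    exact le_of_mul_le_mul_left h1 ha0
  -- binomial expansion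
  have hbin : (M + r) ^ n = (∑ i ∈ Finset.range n, (n.choose (i + 1) : ℝ) * M ^ (i + 1) * r ^ (n - (i + 1))) + r ^ n := by
    have hc : ∀ i ∈ Finset.range n, M ^ (i + 1) * r ^ (n - (i + 1)) * (n.choose (i + 1) : ℝ)
        = (n.choose (i + 1) : ℝ) * M ^ (i + 1) * r ^ (n - (i + 1)) := fun i _ => by ring
    rw [add_pow, Finset.sum_range_succ' (fun k => M ^ k * r ^ (n - k) * (n.choose k : ℝ)) n,
      Finset.sum_congr rfl hc]
    simp
  have hkey : 2 * r ^ n ≤ (M + r) ^ n := by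
    rw [hbin]; linarith
  -- take n-th roots
  have hroots : (2 : ℝ) ^ ((1 : ℝ) / n) * r ≤ M + r := by
    have h2 : ((2 : ℝ) * r ^ n) ^ ((1 : ℝ) / n) ≤ ((M + r) ^ n) ^ ((1 : ℝ) / n) :=
      Real.rpow_le_rpow (by positivity) hkey (by positivity)
    have hL : ((2 : ℝ) * r ^ n) ^ ((1 : ℝ) / n) = (2 : ℝ) ^ ((1 : ℝ) / n) * r := by
      rw [Real.mul_rpow (by norm_num) (by positivity), ← Real.rpow_natCast r n,
        ← Real.rpow_mul hr0, mul_one_div, div_self hn0, Real.rpow_one]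
    have hR : ((M + r) ^ n) ^ ((1 : ℝ) / n) = M + r := by
      rw [← Real.rpow_natCast (M + r) n, ← Real.rpow_mul (by positivity),
        mul_one_div, div_self hn0, Real.rpow_one]
    rw [hL, hR] at h2
    exact h2
  have hpos : 0 < (2 : ℝ) ^ ((1 : ℝ) / n) - 1 := by
    have : (1 : ℝ) < (2 : ℝ) ^ ((1 : ℝ) / n) := by
      exact (Real.one_lt_rpow_iff_of_pos (by norm_num)).mpr (Or.inl ⟨by norm_num, by positivity⟩)
    linarith
  have hfin : ((2 : ℝ) ^ ((1 : ℝ) / n) - 1) * r ≤ M := by nlinarith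
  calc r = ((2 : ℝ) ^ ((1 : ℝ) / n) - 1)⁻¹ * (((2 : ℝ) ^ ((1 : ℝ) / n) - 1) * r) := by
        field_simp
    _ ≤ ((2 : ℝ) ^ ((1 : ℝ) / n) - 1)⁻¹ * M :=
        mul_le_mul_of_nonneg_left hfin (by positivity)
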